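/- arXiv:1701.03752 — 4 statements merged into one kernel-verified Lean document; each statement's English description precedes it below -/
import Mathlib

section
/- For every inductive partially ordered set (P, ≤) (i.e., one in which every linearly ordered subset has a least upper bound) and every expansive function f : P → P (i.e., x ≤ f(x) for all x ∈ P), there exists x* ∈ P with f(x*) = x*. -/
/-- **Zermelo's Fixed Point Theorem.** If `(P, ≤)` is an inductive partial order
(every chain, including the empty one, has a least upper bound) and `f : P → P` is
expansive (`x ≤ f x` for all `x`), then `f` has a fixed point. -/
theorem zermelo_fixed_point {P : Type*} [PartialOrder P]
    (hind : ∀ C : Set P, IsChain (· ≤ ·) C → ∃ s : P, IsLUB C s)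
    (f : P → P) (hf : ∀ x : P, x ≤ f x) :
    ∃ x : P, f x = x := by
  obtain ⟨m, hm⟩ := exists_maximal_of_chains_bounded
    (fun C hC => (hind C hC).imp fun s hs => hs.1) (fun {_ _ _} => le_trans)
  exact ⟨m, le_antisymm (hm (f m) (hf m)) (hf m)⟩
end

section
/- Let X be a separable Banach space and K ⊆ X. Then K is weakly compact (compact in the weak topology) if and only if K is weakly closed and for every sequence (x_n) in K there exist an infinite set L ⊆ ℕ and a point x ∈ K such that for every x* in the closed unit ball of the dual, lim_{n ∈ L} x*(x_n) = x*(x). -/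
open Filter Topology Metric Set NormedSpace Bornology

section Aux

variable {X : Type*} [NormedAddCommGroup X] [NormedSpace ℝ X]

private lemma ES.neBot_inf_principal {L : Set ℕ} (hL : L.Infinite) :
    (Filter.atTop ⊓ Filter.principal L).NeBot := by
  rw [Filter.inf_principal_neBot_iff]
  intro U hU
  obtain ⟨a, ha⟩ := Filter.mem_atTop_sets.mp hU
  obtain ⟨b, hbL, hba⟩ := hL.exists_gt a
  exact ⟨b, ha b hba.le, hbL⟩

private lemma ES.map_atTop_eq {φ : ℕ → ℕ} (h : StrictMono φ) :
    Filter.atTop ⊓ Filter.principal (Set.range φ) = Filter.map φ Filter.atTop := by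
  apply le_antisymm
  · intro s hs
    rw [Filter.mem_map, Filter.mem_atTop_sets] at hs
    obtain ⟨N, hN⟩ := hs
    rw [Filter.mem_inf_principal]
    filter_upwards [Filter.mem_atTop (φ N)] with k hk
    rintro ⟨m, rfl⟩
    exact hN m (h.le_iff_le.mp hk)
  · refine le_inf (h.tendsto_atTop) ?_
    rw [Filter.le_principal_iff]
    exact Filter.mem_map.mpr (Filter.Eventually.of_forall fun n => Set.mem_range_self n)

private lemma ES.tendsto_all_of_tendsto_unit {xs : ℕ → X} {x : X} {F : Filter ℕ}
    (h : ∀ f : X →L[ℝ] ℝ, ‖f‖ ≤ 1 → Filter.Tendsto (fun n => f (xs n)) F (nhds (f x)))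
    (f : X →L[ℝ] ℝ) : Filter.Tendsto (fun n => f (xs n)) F (nhds (f x)) := by
  rcases eq_or_ne f 0 with rfl | hf
  · simpa using tendsto_const_nhds
  · have hn : (0:ℝ) < ‖f‖ := norm_pos_iff.mpr hf
    set g : X →L[ℝ] ℝ := ‖f‖⁻¹ • f with hg
    have hg1 : ‖g‖ ≤ 1 := by
      refine le_trans (ContinuousLinearMap.opNorm_smul_le _ _) ?_
      rw [norm_inv, norm_norm, inv_mul_cancel₀ hn.ne']
    have := (h g hg1).const_mul ‖f‖
    have hgx : ∀ y : X, ‖f‖ * g y = f y := by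
      intro y
      rw [hg]
      simp [ContinuousLinearMap.smul_apply, ← mul_assoc, mul_inv_cancel₀ hn.ne']
    simpa only [hgx] using this

private lemma ES.bounded_of_weak [CompleteSpace X] {K : Set X}
    (h : ∀ f : X →L[ℝ] ℝ, ∃ C, ∀ x ∈ K, |f x| ≤ C) :
    ∃ R : ℝ, 0 ≤ R ∧ ∀ x ∈ K, ‖x‖ ≤ R := by
  have hb : ∀ f : StrongDual ℝ X, ∃ C, ∀ i : K,
      ‖(inclusionInDoubleDual ℝ X (i : X)) f‖ ≤ C := by
    intro f
    obtain ⟨C, hC⟩ := h f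
    exact ⟨C, fun i => by simpa [NormedSpace.dual_def, Real.norm_eq_abs] using hC i i.2⟩
  obtain ⟨C', hC'⟩ := banach_steinhaus (g := fun i : K => inclusionInDoubleDual ℝ X (i : X)) hb
  refine ⟨max C' 0, le_max_right _ _, fun x hx => ?_⟩
  have := hC' ⟨x, hx⟩
  have hnorm : ‖inclusionInDoubleDual ℝ X x‖ = ‖x‖ :=
    (inclusionInDoubleDualLi ℝ (E := X)).norm_map x
  exact le_trans (by rw [← hnorm]; exact this) (le_max_left _ _)

private lemma ES.exists_separating [TopologicalSpace.SeparableSpace X] :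
    ∃ d : ℕ → X →L[ℝ] ℝ, (∀ k, ‖d k‖ ≤ 1) ∧
      ∀ x y : X, (∀ k, d k x = d k y) → x = y := by
  have : Nonempty X := ⟨0⟩
  obtain ⟨u, hu⟩ := TopologicalSpace.exists_dense_seq X
  have hchoice : ∀ n, ∃ g : X →L[ℝ] ℝ, ‖g‖ ≤ 1 ∧ g (u n) = ‖u n‖ := by
    intro n
    rcases eq_or_ne (u n) 0 with h0 | h0
    · exact ⟨0, by simp [h0]⟩
    · obtain ⟨g, hg1, hg2⟩ := exists_dual_vector ℝ (u n) (norm_ne_zero_iff.mpr h0)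
      exact ⟨g, hg1.le, by simpa using hg2⟩
  choose d hd1 hd2 using hchoice
  refine ⟨d, hd1, fun x y hxy => ?_⟩
  by_contra hne
  have hz : x - y ≠ 0 := sub_ne_zero.mpr hne
  have hpos : (0:ℝ) < ‖x - y‖ := norm_pos_iff.mpr hz
  obtain ⟨n, hn⟩ := hu.exists_dist_lt (x - y) (show (0:ℝ) < ‖x - y‖ / 2 by linarith)
  rw [dist_eq_norm] at hn
  have h1 : d n (x - y) = 0 := by
    have := hxy n
    simp [map_sub, this]
  have h2 : |d n (u n)| ≤ ‖x - y‖ / 2 := by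
    have : d n (u n) = d n (u n) - d n (x - y) := by rw [h1, sub_zero]
    rw [this, ← map_sub]
    calc |d n (u n - (x - y))| ≤ ‖d n‖ * ‖u n - (x - y)‖ := (d n).le_opNorm _
      _ ≤ 1 * (‖x - y‖ / 2) := by
          apply mul_le_mul (hd1 n) _ (norm_nonneg _) zero_le_one
          rw [← norm_neg]; simpa [neg_sub] using hn.le
      _ = ‖x - y‖ / 2 := one_mul _
  have h3 : ‖u n‖ > ‖x - y‖ / 2 := by
    have := norm_sub_norm_le (x - y) (u n)
    linarith
  rw [hd2 n] at h2
  rw [abs_of_nonneg (norm_nonneg _)] at h2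
  have : ‖x - y‖ / 2 > 0 := by linarith
  linarith

private lemma ES.tendsto_of_unique_clusterPt {Y : Type*} [TopologicalSpace Y]
    {C : Set Y} (hC : IsCompact C) {F : Filter Y} [F.NeBot] (hF : F ≤ Filter.principal C)
    {c : Y} (h : ∀ y, ClusterPt y F → y = c) : F ≤ nhds c := by
  by_contra hc
  obtain ⟨U, hU, hUF⟩ : ∃ U ∈ nhds c, U ∉ F := by
    by_contra h'
    push_neg at h'
    exact hc fun U hU => h' U hU
  obtain ⟨V, hVU, hVopen, hcV⟩ := mem_nhds_iff.mp hU
  have hVF : V ∉ F := fun hVF => hUF (Filter.mem_of_superset hVF hVU)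
  have hne : (F ⊓ Filter.principal Vᶜ).NeBot := by
    rw [Filter.neBot_iff]
    intro hbot
    exact hVF (by simpa using Filter.inf_principal_eq_bot.mp hbot)
  obtain ⟨c'', hc''C, hc''⟩ := hC.exists_clusterPt (f := F ⊓ Filter.principal Vᶜ)
    (le_trans inf_le_left hF)
  have hc''c : c'' = c := h c'' (hc''.mono inf_le_left)
  have : c'' ∈ closure Vᶜ := by
    rw [mem_closure_iff_clusterPt]
    exact hc''.mono (le_trans inf_le_right le_rfl)
  rw [hVopen.isClosed_compl.closure_eq, hc''c] at this
  exact this hcV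

private lemma ES.near_norming {X : Type*} [NormedAddCommGroup X] [NormedSpace ℝ X]
    (y : StrongDual ℝ (StrongDual ℝ X)) {δ : ℝ} (hδ : 0 < δ) :
    ∃ f : X →L[ℝ] ℝ, ‖f‖ ≤ 1 ∧ ‖y‖ - δ ≤ ‖y f‖ := by
  rcases le_or_gt ‖y‖ δ with h | h
  · exact ⟨0, by simp, by simp; linarith⟩
  · obtain ⟨f, hf1, hf2⟩ := y.exists_lt_apply_of_lt_opNorm (show ‖y‖ - δ < ‖y‖ by linarith)
    exact ⟨f, hf1.le, hf2.le⟩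

private lemma ES.isInducing :
    Topology.IsInducing (fun x : WeakSpace ℝ X =>
      (StrongDual.toWeakDual (inclusionInDoubleDual ℝ X ((toWeakSpace ℝ X).symm x)) :
        WeakDual ℝ (X →L[ℝ] ℝ))) := by
  constructor
  show (TopologicalSpace.induced
      (fun (x : WeakSpace ℝ X) (f : X →L[ℝ] ℝ) => (topDualPairing ℝ X).flip x f)
      Pi.topologicalSpace) =
    TopologicalSpace.induced _
      (TopologicalSpace.induced
        (fun (v : WeakDual ℝ (X →L[ℝ] ℝ)) (f : X →L[ℝ] ℝ) => topDualPairing ℝ (X →L[ℝ] ℝ) v f)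
        Pi.topologicalSpace)
  rw [induced_compose]
  rfl

end Aux

/-- **Eberlein–Šmulian (a form of).** A subset `K` of a separable Banach space is weakly
compact iff it is weakly closed and for every sequence `(x n)` in `K` there are an
infinite `L ⊆ ℕ` and `x ∈ K` such that `x*(x n) → x*(x)` along `L` for every `x*` in
the closed unit ball of the dual. -/
theorem weaklyCompact_iff_weaklyClosed_and_subseq
    {X : Type*} [NormedAddCommGroup X] [NormedSpace ℝ X] [CompleteSpace X]
    [TopologicalSpace.SeparableSpace X] (K : Set X) :
    IsCompact (toWeakSpace ℝ X '' K) ↔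
      (IsClosed (toWeakSpace ℝ X '' K) ∧
        ∀ xs : ℕ → X, (∀ n, xs n ∈ K) →
          ∃ L : Set ℕ, L.Infinite ∧ ∃ x ∈ K,
            ∀ xstar : X →L[ℝ] ℝ, ‖xstar‖ ≤ 1 →
              Filter.Tendsto (fun n => xstar (xs n))
                (Filter.atTop ⊓ Filter.principal L) (nhds (xstar x))) := by
  classical
  set J := inclusionInDoubleDual ℝ X with hJdef
  set jw : WeakSpace ℝ X → WeakDual ℝ (X →L[ℝ] ℝ) :=
    fun x => StrongDual.toWeakDual (J ((toWeakSpace ℝ X).symm x)) with hjw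
  have hind : Topology.IsInducing jw := ES.isInducing
  have hjw_inj : Function.Injective jw := by
    intro a b hab
    have h1 : J ((toWeakSpace ℝ X).symm a) = J ((toWeakSpace ℝ X).symm b) :=
      (StrongDual.toWeakDual (𝕜 := ℝ) (E := X →L[ℝ] ℝ)).injective hab
    have h2 : (toWeakSpace ℝ X).symm a = (toWeakSpace ℝ X).symm b := by
      rw [eq_iff_forall_dual_eq ℝ]
      intro g
      exact DFunLike.congr_fun h1 g
    exact (toWeakSpace ℝ X).symm.injective h2
  constructor
  · intro hc
    have hclosed : IsClosed (toWeakSpace ℝ X '' K) := by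
      have h1 : IsCompact (jw '' (toWeakSpace ℝ X '' K)) := hc.image hind.continuous
      have h3 : toWeakSpace ℝ X '' K = jw ⁻¹' (jw '' (toWeakSpace ℝ X '' K)) :=
        (Set.preimage_image_eq _ hjw_inj).symm
      rw [h3]
      exact h1.isClosed.preimage hind.continuous
    refine ⟨hclosed, ?_⟩
    have hbdd : ∃ R : ℝ, 0 ≤ R ∧ ∀ x ∈ K, ‖x‖ ≤ R := by
      apply ES.bounded_of_weak
      intro f
      have hf : Continuous fun x : WeakSpace ℝ X => f ((toWeakSpace ℝ X).symm x) :=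
        WeakBilin.eval_continuous ((topDualPairing ℝ X).flip) f
      have hcomp : IsCompact ((fun x : WeakSpace ℝ X => f ((toWeakSpace ℝ X).symm x)) ''
          (toWeakSpace ℝ X '' K)) := hc.image hf
      obtain ⟨C, hC⟩ := hcomp.isBounded.exists_norm_le
      refine ⟨C, fun x hx => ?_⟩
      have hmem : f x ∈ (fun x : WeakSpace ℝ X => f ((toWeakSpace ℝ X).symm x)) ''
          (toWeakSpace ℝ X '' K) := ⟨toWeakSpace ℝ X x, ⟨x, hx, rfl⟩, rfl⟩
      simpa [Real.norm_eq_abs] using hC _ hmem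
    obtain ⟨R, hR0, hRK⟩ := hbdd
    obtain ⟨d, hd1, hd2⟩ := ES.exists_separating (X := X)
    intro xs hxs
    have hScomp : IsCompact (Set.pi Set.univ (fun _ : ℕ => Icc (-R) R)) :=
      isCompact_univ_pi fun _ => isCompact_Icc
    have hmem : ∀ n, (fun k => d k (xs n)) ∈ Set.pi Set.univ (fun _ : ℕ => Icc (-R) R) := by
      intro n k _
      have h1 : |d k (xs n)| ≤ R := by
        calc |d k (xs n)| ≤ ‖d k‖ * ‖xs n‖ := by
              simpa [Real.norm_eq_abs] using (d k).le_opNorm (xs n)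
          _ ≤ 1 * R := mul_le_mul (hd1 k) (hRK _ (hxs n)) (norm_nonneg _) zero_le_one
          _ = R := one_mul R
      obtain ⟨ha, hb⟩ := abs_le.mp h1
      exact ⟨ha, hb⟩
    obtain ⟨a, -, φ, hφ, hconv⟩ := hScomp.tendsto_subseq hmem
    have hLinf : (Set.range φ).Infinite := Set.infinite_range_of_injective hφ.injective
    set F := Filter.atTop ⊓ Filter.principal (Set.range φ) with hF
    have hFeq : F = Filter.map φ Filter.atTop := ES.map_atTop_eq hφ
    haveI hFne : F.NeBot := by rw [hFeq]; exact Filter.map_neBot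
    have hcoord : ∀ k, Filter.Tendsto (fun n => d k (xs n)) F (nhds (a k)) := by
      intro k
      rw [hFeq, Filter.tendsto_map'_iff]
      exact (tendsto_pi_nhds.mp hconv) k
    set G := Filter.map (fun n => toWeakSpace ℝ X (xs n)) F with hG
    haveI : G.NeBot := Filter.map_neBot
    have hGle : G ≤ Filter.principal (toWeakSpace ℝ X '' K) := by
      rw [Filter.le_principal_iff, hG, Filter.mem_map]
      exact Filter.Eventually.of_forall fun n => ⟨xs n, hxs n, rfl⟩
    obtain ⟨c, hcC, hclus⟩ := hc.exists_clusterPt (f := G) hGle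
    obtain ⟨x0, hx0K, hx0⟩ := hcC
    have hcluscoord : ∀ (y : WeakSpace ℝ X), ClusterPt y G →
        ∀ k, d k ((toWeakSpace ℝ X).symm y) = a k := by
      intro y hy k
      have hcont : Continuous fun z : WeakSpace ℝ X => d k ((toWeakSpace ℝ X).symm z) :=
        WeakBilin.eval_continuous ((topDualPairing ℝ X).flip) (d k)
      have hmapcl : ClusterPt (d k ((toWeakSpace ℝ X).symm y))
          (Filter.map (fun z : WeakSpace ℝ X => d k ((toWeakSpace ℝ X).symm z)) G) :=
        hy.map hcont.continuousAt Filter.tendsto_map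
      have heq : Filter.map (fun z : WeakSpace ℝ X => d k ((toWeakSpace ℝ X).symm z)) G
          = Filter.map (fun n => d k (xs n)) F := by
        rw [hG, Filter.map_map]
        rfl
      rw [heq] at hmapcl
      exact eq_of_nhds_neBot (hmapcl.mono (hcoord k))
    have huniq : ∀ y, ClusterPt y G → y = c := by
      intro y hy
      have h1 := hcluscoord y hy
      have h2 := hcluscoord c hclus
      have h3 : (toWeakSpace ℝ X).symm y = (toWeakSpace ℝ X).symm c :=
        hd2 _ _ fun k => by rw [h1 k, h2 k]
      exact (toWeakSpace ℝ X).symm.injective h3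
    have htend : G ≤ nhds c := ES.tendsto_of_unique_clusterPt hc hGle huniq
    refine ⟨Set.range φ, hLinf, x0, hx0K, ?_⟩
    intro f hf1
    have hcont : Continuous fun z : WeakSpace ℝ X => f ((toWeakSpace ℝ X).symm z) :=
      WeakBilin.eval_continuous ((topDualPairing ℝ X).flip) f
    have hcomp : Filter.Tendsto (fun n => f ((toWeakSpace ℝ X).symm (toWeakSpace ℝ X (xs n))))
        F (nhds (f ((toWeakSpace ℝ X).symm c))) :=
      (hcont.tendsto c).comp htend
    have hsc : (toWeakSpace ℝ X).symm c = x0 := by rw [← hx0]; rfl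
    rw [hsc] at hcomp
    exact hcomp
  · rintro ⟨hclosed, hseq⟩
    -- Step 1: K is bounded
    have hbdd : ∃ R : ℝ, ∀ x ∈ K, ‖x‖ ≤ R := by
      by_contra hR
      push_neg at hR
      have hchoice : ∀ n : ℕ, ∃ x, x ∈ K ∧ (n : ℝ) < ‖x‖ := by
        intro n
        obtain ⟨x, hxK, hx⟩ := hR n
        exact ⟨x, hxK, hx⟩
      choose xs hxsK hxsn using hchoice
      obtain ⟨L, hLinf, x, hxK, hconv⟩ := hseq xs hxsK
      haveI := hLinf.to_subtype
      set e := Nat.orderEmbeddingOfSet L with he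
      have heL : ∀ m, (e m) ∈ L := fun m => by
        rw [he, Nat.coe_orderEmbeddingOfSet]
        exact Subtype.mem _
      have htend_e : Filter.Tendsto e Filter.atTop (Filter.atTop ⊓ Filter.principal L) := by
        refine Filter.tendsto_inf.mpr ⟨e.strictMono.tendsto_atTop, ?_⟩
        rw [Filter.tendsto_principal]
        exact Filter.Eventually.of_forall heL
      have hb : ∀ f : StrongDual ℝ X, ∃ C, ∀ m : ℕ, ‖(J (xs (e m))) f‖ ≤ C := by
        intro f
        have h1 : Filter.Tendsto (fun m => ‖f (xs (e m))‖) Filter.atTop (nhds ‖f x‖) :=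
          (((ES.tendsto_all_of_tendsto_unit hconv f).comp htend_e).norm)
        obtain ⟨C, hC⟩ := h1.bddAbove_range
        exact ⟨C, fun m => hC (Set.mem_range_self m)⟩
      obtain ⟨C', hC'⟩ := banach_steinhaus hb
      obtain ⟨m, hm⟩ := exists_nat_gt C'
      have h1 : ‖xs (e m)‖ ≤ C' := by
        have h2 := hC' m
        have h4 : ‖J (xs (e m))‖ = ‖xs (e m)‖ :=
          (inclusionInDoubleDualLi ℝ (E := X)).norm_map (xs (e m))
        rwa [h4] at h2
      have h2 : (m : ℝ) ≤ (e m : ℝ) := Nat.cast_le.mpr e.strictMono.le_apply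
      have h3 := hxsn (e m)
      linarith
    obtain ⟨R, hRK⟩ := hbdd
    have hnormJ : ∀ z : X, ‖J z‖ = ‖z‖ := fun z =>
      (inclusionInDoubleDualLi ℝ (E := X)).norm_map z
    -- Step 2: the image of K in the weak dual of the dual is closed (Whitley's construction)
    set S : Set (WeakDual ℝ (X →L[ℝ] ℝ)) :=
      (fun z : X => StrongDual.toWeakDual (J z)) '' K with hS
    have hSclosed : IsClosed S := by
      rw [← closure_subset_iff_isClosed]
      intro v hv
      haveI : Nonempty X := ⟨0⟩
      obtain ⟨u, hu⟩ := TopologicalSpace.exists_dense_seq X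
      set v' : (X →L[ℝ] ℝ) →L[ℝ] ℝ := WeakDual.toStrongDual v with hv'
      have hFk : ∀ k m : ℕ, ∃ f : X →L[ℝ] ℝ, ‖f‖ ≤ 1 ∧
          ‖v' - J (u k)‖ - 1 / (m + 1) ≤ ‖(v' - J (u k)) f‖ := by
        intro k m
        exact ES.near_norming _ (by positivity)
      choose Fn hFn1 hFn2 using hFk
      set e : ℕ → (X →L[ℝ] ℝ) := fun j => Fn (Nat.unpair j).1 (Nat.unpair j).2 with hedef
      have he1 : ∀ j, ‖e j‖ ≤ 1 := fun j => hFn1 _ _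
      have hxs : ∀ n : ℕ, ∃ z, z ∈ K ∧ ∀ j ≤ n, |v (e j) - e j z| < 1 / (n + 1) := by
        intro n
        set O : Set (WeakDual ℝ (X →L[ℝ] ℝ)) := ⋂ j ∈ Finset.range (n + 1),
          (fun y : WeakDual ℝ (X →L[ℝ] ℝ) => y (e j)) ⁻¹'
            Metric.ball (v (e j)) (1 / (n + 1)) with hO
        have hOopen : IsOpen O :=
          isOpen_biInter_finset fun j _ =>
            Metric.isOpen_ball.preimage (WeakDual.eval_continuous (e j))
        have hvO : v ∈ O := by
          rw [hO]
          refine Set.mem_iInter₂.mpr fun j _ => ?_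
          simp only [Set.mem_preimage, Metric.mem_ball, dist_self]
          positivity
        obtain ⟨y, hyO, hyS⟩ := mem_closure_iff.mp hv O hOopen hvO
        obtain ⟨z, hzK, rfl⟩ := hyS
        refine ⟨z, hzK, fun j hj => ?_⟩
        have h1 := Set.mem_iInter₂.mp hyO j (Finset.mem_range.mpr (Nat.lt_succ_of_le hj))
        simp only [Set.mem_preimage, Metric.mem_ball] at h1
        rw [Real.dist_eq] at h1
        rw [abs_sub_comm]
        exact h1
      choose xs hxsK hxsb using hxs
      obtain ⟨L, hLinf, x, hxK, hconv⟩ := hseq xs hxsK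
      set F := Filter.atTop ⊓ Filter.principal L with hF
      haveI := ES.neBot_inf_principal hLinf
      have hkey : ∀ j, v (e j) = e j x := by
        intro j
        have h1 : Filter.Tendsto (fun n => v (e j) - e j (xs n)) F (nhds 0) := by
          apply squeeze_zero_norm' (a := fun n : ℕ => 1 / (n + 1 : ℝ))
          · have hev : ∀ᶠ n in F, j ≤ n :=
              (Filter.eventually_ge_atTop j).filter_mono inf_le_left
            filter_upwards [hev] with n hn
            rw [Real.norm_eq_abs]
            exact (hxsb n j hn).le
          · exact tendsto_one_div_add_atTop_nhds_zero_nat.mono_left inf_le_left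
        have h2 : Filter.Tendsto (fun n => v (e j) - e j (xs n)) F
            (nhds (v (e j) - e j x)) := tendsto_const_nhds.sub (hconv (e j) (he1 j))
        have h3 := tendsto_nhds_unique h2 h1
        linarith [h3]
      have hfin : ∀ ε : ℝ, 0 < ε → ‖v' - J x‖ ≤ 3 * ε := by
        intro ε hε
        obtain ⟨k, hk⟩ := hu.exists_dist_lt x hε
        obtain ⟨m, hm⟩ := exists_nat_one_div_lt hε
        set y := v' - J (u k) with hy
        set w := v' - J x with hw
        have hwy : ‖w - y‖ < ε := by
          have h1 : w - y = J (u k) - J x := by rw [hw, hy]; abel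
          rw [h1, ← map_sub, hnormJ (u k - x)]
          rw [dist_comm, dist_eq_norm] at hk
          exact hk
        have hJb := hFn2 k m
        have he0 : w (e (Nat.pair k m)) = 0 := by
          have h1 := hkey (Nat.pair k m)
          rw [hw]
          simp only [ContinuousLinearMap.sub_apply]
          rw [sub_eq_zero]
          exact h1
        have hyf : ‖y (Fn k m)‖ ≤ ε := by
          have h1 : y (Fn k m) = w (e (Nat.pair k m)) + (y - w) (Fn k m) := by
            rw [hedef]
            simp only [Nat.unpair_pair, ContinuousLinearMap.sub_apply]
            ring
          rw [h1, he0, zero_add]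
          calc ‖(y - w) (Fn k m)‖ ≤ ‖y - w‖ * ‖Fn k m‖ := (y - w).le_opNorm _
            _ ≤ ε * 1 := by
                refine mul_le_mul ?_ (hFn1 k m) (norm_nonneg _) hε.le
                rw [← norm_neg (y - w), neg_sub y w]
                exact hwy.le
            _ = ε := mul_one ε
        have h1m : 1 / ((m : ℝ) + 1) < ε := hm
        have hnorm : ‖w‖ ≤ ‖w - y‖ + ‖y‖ := by
          calc ‖w‖ = ‖(w - y) + y‖ := by rw [sub_add_cancel w y]
            _ ≤ ‖w - y‖ + ‖y‖ := norm_add_le (w - y) y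
        have hynorm : ‖y‖ ≤ ε + 1 / (m + 1) := by
          have := hJb
          push_cast at this ⊢
          linarith [hyf]
        push_cast at hynorm
        linarith
      have hveq : v' = J x := by
        rw [← sub_eq_zero (a := v'), ← norm_le_zero_iff (a := v' - J x)]
        refine le_of_forall_pos_le_add fun ε hε => ?_
        have := hfin (ε / 3) (by positivity)
        linarith
      refine ⟨x, hxK, ?_⟩
      show StrongDual.toWeakDual (J x) = v
      rw [← hveq]
      rfl
    -- Step 3: S is compact
    have hScomp : IsCompact S := by
      apply WeakDual.isCompact_of_bounded_of_closed _ hSclosed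
      rw [← WeakDual.isBounded_toWeakDual_preimage_iff_isBounded, isBounded_iff_forall_norm_le]
      refine ⟨R, ?_⟩
      intro g hg
      obtain ⟨z, hzK, hz⟩ := hg
      have h1 : g = J z := hz.symm
      rw [h1, hnormJ z]
      exact hRK z hzK
    -- Step 4: transfer compactness back along the inducing map
    rw [hind.isCompact_iff]
    have himg : jw '' (toWeakSpace ℝ X '' K) = S := by
      rw [Set.image_image]
      rfl
    rw [himg]
    exact hScomp
end

section
/- Let X be a separable Banach space, K ⊆ X weakly compact, and (x_n) a sequence in K. For each n let τ_{x_n} be the function on the dual unit ball B (with the weak* topology) given by τ_{x_n}(x*) = x*(x_n). Then every cluster point of the sequence (τ_{x_n}) in the product topology of ℝ^B is of the form τ_x for some x ∈ K; in particular every such cluster point is weak*-continuous on B. -/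
/-- Let `K` be a weakly compact subset of a separable Banach space `X`, `(x n)` a
sequence in `K`, and `B` the closed unit ball of the dual with the weak* topology.
Every cluster point in the product topology of `ℝ^B` of the sequence of functions
`τ_{x n} : B → ℝ`, `τ_{x n}(x*) = x*(x n)`, is of the form `τ_x` for some `x ∈ K`;
in particular it is weak*-continuous on `B`. -/
theorem clusterPoint_of_tau_seq
    {X : Type*} [NormedAddCommGroup X] [NormedSpace ℝ X] [CompleteSpace X]
    [TopologicalSpace.SeparableSpace X]
    (K : Set X) (hK : IsCompact (toWeakSpace ℝ X '' K))
    (xs : ℕ → X) (hxs : ∀ n, xs n ∈ K)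
    (g : {φ : WeakDual ℝ X // ∀ y : X, |φ y| ≤ ‖y‖} → ℝ)
    (hg : MapClusterPt (x := g) Filter.atTop
      (fun n (φ : {φ : WeakDual ℝ X // ∀ y : X, |φ y| ≤ ‖y‖}) => φ.1 (xs n))) :
    (∃ x ∈ K, g = fun φ => φ.1 x) ∧ Continuous g := by
  classical
  set S : Set ({φ : WeakDual ℝ X // ∀ y : X, |φ y| ≤ ‖y‖} → ℝ) :=
    (fun (x : WeakSpace ℝ X) (φ : {φ : WeakDual ℝ X // ∀ y : X, |φ y| ≤ ‖y‖}) =>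
      (topDualPairing ℝ X).flip x φ.1) '' (toWeakSpace ℝ X '' K) with hS
  have hEcont : Continuous fun (x : WeakSpace ℝ X)
      (φ : {φ : WeakDual ℝ X // ∀ y : X, |φ y| ≤ ‖y‖}) =>
      (topDualPairing ℝ X).flip x φ.1 := by
    apply continuous_pi
    intro φ
    exact WeakBilin.eval_continuous _ φ.1
  have hScompact : IsCompact S := hK.image hEcont
  have hgS : g ∈ S := by
    have h1 : g ∈ closure S := by
      rw [mem_closure_iff_clusterPt]
      have h2 : ClusterPt g (Filter.map (fun n (φ : {φ : WeakDual ℝ X // ∀ y : X, |φ y| ≤ ‖y‖}) => φ.1 (xs n)) Filter.atTop) := hg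
      refine h2.mono (Filter.le_principal_iff.2 (Filter.mem_map.2 ?_))
      filter_upwards with n
      exact ⟨toWeakSpace ℝ X (xs n), ⟨_, hxs n, rfl⟩, rfl⟩
    rwa [hScompact.isClosed.closure_eq] at h1
  obtain ⟨_, ⟨x, hxK, rfl⟩, rfl⟩ := hgS
  refine ⟨⟨x, hxK, rfl⟩, ?_⟩
  exact (WeakBilin.eval_continuous (topDualPairing ℝ X) x).comp continuous_subtype_val
end

section
/- Let X be a separable Banach space, F a nonempty closed bounded convex subset of X, and suppose F is not weakly compact. Fix Borel selectors d_n : F(X) → X with (d_n(F)) dense in F. Then there exist 0 < ε ≤ 1 ≤ M and a sequence of naturals (u_n) such that for every m, the finite sequence (d_{u_1}(F), …, d_{u_m}(F)) is M-Schauder and ε-dominates the summing basis; i.e., the tree T(F, ε, M) has an infinite branch. -/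
/-- The Effros-Borel σ-algebra on the closed subsets of a topological space. -/
def effrosBorel (X : Type*) [TopologicalSpace X] :
    MeasurableSpace {F : Set X // IsClosed F} :=
  MeasurableSpace.generateFrom
    {S : Set {F : Set X // IsClosed F} |
      ∃ U : Set X, IsOpen U ∧ S = {C : {F : Set X // IsClosed F} | ((C : Set X) ∩ U).Nonempty}}

open Finset in
/-- `(x 0, …, x (m-1))` is `M`-Schauder: every partial sum of a linear combination is
bounded by `M` times the full sum, in norm. -/
def MSchauder {X : Type*} [NormedAddCommGroup X] [NormedSpace ℝ X]
    (M : ℝ) (m : ℕ) (x : ℕ → X) : Prop :=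
  ∀ k ≤ m, ∀ a : ℕ → ℝ,
    ‖∑ n ∈ Finset.range k, a n • x n‖ ≤ M * ‖∑ n ∈ Finset.range m, a n • x n‖

/-- `(x 0, …, x (m-1))` `ε`-dominates the summing basis: every convex combination with
positive coefficients has norm at least `ε`. -/
def DominatesSummingBasis {X : Type*} [NormedAddCommGroup X] [NormedSpace ℝ X]
    (ε : ℝ) (m : ℕ) (x : ℕ → X) : Prop :=
  ∀ a : ℕ → ℝ, (∀ n < m, 0 < a n) → ∑ n ∈ Finset.range m, a n = 1 →
    ε ≤ ‖∑ n ∈ Finset.range m, a n • x n‖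

/-- The tree `T(F, ε, M)` of finite sequences `u` of naturals such that the corresponding
finite sequence of selector values `(d (u 1) F, …, d (u m) F)` is `M`-Schauder and
`ε`-dominates the summing basis. -/
def treeT {X : Type*} [NormedAddCommGroup X] [NormedSpace ℝ X]
    (d : ℕ → {F : Set X // IsClosed F} → X) (F : {F : Set X // IsClosed F})
    (ε M : ℝ) : Set (List ℕ) :=
  {u | MSchauder M u.length (fun n => d (u.getD n 0) F) ∧
       DominatesSummingBasis ε u.length (fun n => d (u.getD n 0) F)}

namespace NormedSpace

/-- The topological dual, as in the older Mathlib. -/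
abbrev Dual (𝕜 : Type*) [NontriviallyNormedField 𝕜] (E : Type*) [SeminormedAddCommGroup E]
    [NormedSpace 𝕜 E] : Type _ := E →L[𝕜] 𝕜

end NormedSpace

section Aux
open NormedSpace Filter Set Topology

theorem exists_functional_vanishing {Z : Type*} [NormedAddCommGroup Z] [NormedSpace ℝ Z]
    (S : Submodule ℝ Z) (hS : IsClosed (S : Set Z)) (y : Z) (hy : y ∉ S) :
    ∃ Φ : Dual ℝ Z, Φ y = 1 ∧ ∀ s ∈ S, Φ s = 0 := by
  obtain ⟨f, u, hfy, hfS⟩ := geometric_hahn_banach_point_closed S.convex hS hy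
  have hS0 : ∀ s ∈ S, f s = 0 := by
    intro s hs
    by_contra h0
    -- f (t • s) = t * f s can be made arbitrarily small
    have : ∀ t : ℝ, u < t * f s := fun t => by
      simpa [map_smul] using hfS (t • s) (S.smul_mem t hs)
    have h1 := this ((u - 1) / f s)
    rw [div_mul_cancel₀ _ h0] at h1
    linarith
  have hu0 : u < 0 := by simpa using hfS 0 S.zero_mem
  have hfy0 : f y ≠ 0 := by intro h; rw [h] at hfy; linarith
  refine ⟨(f y)⁻¹ • f, ?_, ?_⟩
  · simp [inv_mul_cancel₀ hfy0]
  · intro s hs; simp [hS0 s hs]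

variable {X : Type*} [NormedAddCommGroup X] [NormedSpace ℝ X]

theorem exists_wstar_cluster (F : Set X) (hcl : IsClosed F) (hne : F.Nonempty)
    (hconv : Convex ℝ F) {R : ℝ} (hR : ∀ u ∈ F, ‖u‖ ≤ R)
    (hnc : ¬ IsCompact (toWeakSpace ℝ X '' F)) :
    ∃ x : Dual ℝ (Dual ℝ X),
      (∀ (G : Finset (Dual ℝ X)), ∀ η : ℝ, 0 < η → ∃ u ∈ F, ∀ g ∈ G, |g u - x g| < η) ∧
      ‖x‖ ≤ R ∧ x ∉ Set.range (inclusionInDoubleDual ℝ X) := by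
  have hR0 : 0 ≤ R := by
    obtain ⟨u, hu⟩ := hne
    exact (norm_nonneg u).trans (hR u hu)
  by_contra hcon
  push_neg at hcon
  apply hnc
  rw [isCompact_iff_ultrafilter_le_nhds]
  intro 𝒰 h𝒰
  set e := toWeakSpace ℝ X with he
  set 𝒱 : Ultrafilter X := 𝒰.map e.symm with hV
  have hIm : (e '' F) ∈ 𝒰 := le_principal_iff.mp h𝒰
  have hF𝒱 : F ∈ 𝒱 := by
    rw [hV, Ultrafilter.mem_map]
    refine Filter.mem_of_superset hIm ?_
    rintro z ⟨u, hu, rfl⟩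
    simpa using hu
  -- limits along the ultrafilter
  have hlim : ∀ f : Dual ℝ X, ∃ a : ℝ, a ∈ Icc (-(R * ‖f‖)) (R * ‖f‖) ∧
      Tendsto (fun u : X => f u) 𝒱 (𝓝 a) := by
    intro f
    have hmem : Icc (-(R * ‖f‖)) (R * ‖f‖) ∈ 𝒱.map (fun u : X => f u) := by
      rw [Ultrafilter.mem_map]
      refine Filter.mem_of_superset hF𝒱 ?_
      intro u hu
      have h1 : |f u| ≤ ‖f‖ * ‖u‖ := (f.le_opNorm u).trans_eq' (by rw [Real.norm_eq_abs])
      have h2 : ‖f‖ * ‖u‖ ≤ R * ‖f‖ := by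
        rw [mul_comm]
        exact mul_le_mul_of_nonneg_right (hR u hu) (norm_nonneg f)
      simp only [mem_preimage, mem_Icc]
      constructor <;> [linarith [neg_abs_le (f u)]; linarith [le_abs_self (f u)]]
    obtain ⟨a, ha, hle⟩ := isCompact_Icc.ultrafilter_le_nhds (𝒱.map (fun u : X => f u))
      (le_principal_iff.mpr hmem)
    exact ⟨a, ha, hle⟩
  choose L hLmem hLtendsto using hlim
  have hLadd : ∀ f g : Dual ℝ X, L (f + g) = L f + L g := by
    intro f g
    exact tendsto_nhds_unique (hLtendsto (f + g)) ((hLtendsto f).add (hLtendsto g))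
  have hLsmul : ∀ (c : ℝ) (f : Dual ℝ X), L (c • f) = c * L f := by
    intro c f
    exact tendsto_nhds_unique (hLtendsto (c • f)) ((hLtendsto f).const_mul c)
  have hLbound : ∀ f : Dual ℝ X, ‖L f‖ ≤ R * ‖f‖ := by
    intro f
    rw [Real.norm_eq_abs, abs_le]
    have := hLmem f
    exact ⟨(this.1), this.2⟩
  set x : Dual ℝ (Dual ℝ X) := LinearMap.mkContinuous
    { toFun := L, map_add' := hLadd, map_smul' := hLsmul } R hLbound with hx
  have hxapp : ∀ f, x f = L f := fun _ => rfl
  have hxP : ∀ (G : Finset (Dual ℝ X)), ∀ η : ℝ, 0 < η → ∃ u ∈ F, ∀ g ∈ G, |g u - x g| < η := by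
    intro G η hη
    have hA : {u : X | ∀ g ∈ G, |g u - x g| < η} ∈ 𝒱 := by
      have : ∀ g ∈ G, {u : X | |g u - x g| < η} ∈ 𝒱 := by
        intro g _
        have := (hLtendsto g).eventually (eventually_abs_sub_lt (L g) hη)
        rw [← Ultrafilter.mem_coe]
        exact this.mono fun u hu => by simpa [hxapp, abs_sub_comm] using hu
      have heq : {u : X | ∀ g ∈ G, |g u - x g| < η} = ⋂ g ∈ G, {u : X | |g u - x g| < η} := by
        ext u; simp
      rw [heq]
      exact (Filter.biInter_finset_mem G).mpr this
    obtain ⟨u, hu⟩ := Ultrafilter.nonempty_of_mem (Filter.inter_mem hF𝒱 hA)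
    exact ⟨u, hu.1, hu.2⟩
  have hxnorm : ‖x‖ ≤ R := LinearMap.mkContinuous_norm_le _ hR0 _
  obtain ⟨x₀, hx₀⟩ := hcon x hxP hxnorm
  have hxf : ∀ f : Dual ℝ X, x f = f x₀ := by
    intro f
    rw [← hx₀]
    rfl
  have hx₀F : x₀ ∈ F := by
    by_contra hmem
    obtain ⟨f, u, hfy, hfS⟩ := geometric_hahn_banach_point_closed hconv hcl hmem
    have : u ≤ L f := by
      refine ge_of_tendsto (hLtendsto f) ?_
      exact Filter.mem_of_superset hF𝒱 fun b hb => (hfS b hb).le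
    rw [← hxapp, hxf] at this
    linarith
  refine ⟨e x₀, ⟨x₀, hx₀F, rfl⟩, ?_⟩
  have hinj : Function.Injective ⇑(topDualPairing ℝ X).flip := by
    intro a b hab
    rw [NormedSpace.eq_iff_forall_dual_eq ℝ]
    intro g
    exact DFunLike.congr_fun hab g
  rw [← Filter.tendsto_id']
  refine (WeakBilin.tendsto_iff_forall_eval_tendsto _ hinj).mpr ?_
  intro f
  have h1 : Tendsto (fun u : X => f u) 𝒱 (𝓝 (f x₀)) := by
    have := hLtendsto f
    rwa [← hxapp, hxf] at this
  rw [hV, Ultrafilter.coe_map, Filter.tendsto_map'_iff] at h1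
  exact h1
variable {X : Type*} [NormedAddCommGroup X] [NormedSpace ℝ X]
theorem dual_approx_norm {X : Type*} [NormedAddCommGroup X] [NormedSpace ℝ X]
    (y : Dual ℝ X) (c : ℝ) (h : c < ‖y‖) : ∃ f : X, ‖f‖ ≤ 1 ∧ c < y f := by
  by_contra hc
  push_neg at hc
  have h0 : 0 ≤ c := by simpa using hc 0 (by simp)
  have : ‖y‖ ≤ c := by
    refine y.opNorm_le_bound h0 fun f => ?_
    rcases eq_or_ne f 0 with rfl | hf
    · simp [h0]
    · have hpos : 0 < ‖f‖ := norm_pos_iff.2 hf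
      have h1 : y (‖f‖⁻¹ • f) ≤ c := hc _ (by simp [norm_smul, inv_mul_cancel₀ hpos.ne'])
      have h2 : y (-(‖f‖⁻¹ • f)) ≤ c := hc _ (by simp [norm_smul, inv_mul_cancel₀ hpos.ne'])
      rw [map_neg] at h2
      rw [map_smul, smul_eq_mul] at h1 h2
      rw [Real.norm_eq_abs, abs_le]
      have hinv : ‖f‖⁻¹ > 0 := by positivity
      have e1 : ‖f‖ * (‖f‖⁻¹ * y f) = y f := by
        field_simp
      constructor
      · nlinarith [mul_le_mul_of_nonneg_left h2 hpos.le]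
      · nlinarith [mul_le_mul_of_nonneg_left h1 hpos.le]
  linarith

example (X : Type*) [NormedAddCommGroup X] [NormedSpace ℝ X] (x : X) :
    ‖inclusionInDoubleDualLi ℝ (E := X) x‖ = ‖x‖ :=
  (inclusionInDoubleDualLi ℝ).norm_map x



set_option maxHeartbeats 1000000 in
theorem step_lemma (F : Set X) (dseq : ℕ → X) (hdense : F ⊆ closure (Set.range dseq))
    (x : Dual ℝ (Dual ℝ X))
    (hP : ∀ (G : Finset (Dual ℝ X)), ∀ η : ℝ, 0 < η → ∃ u ∈ F, ∀ g ∈ G, |g u - x g| < η)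
    {δ : ℝ} (hδ : 0 < δ)
    (hdist : ∀ z : X, δ ≤ ‖x - inclusionInDoubleDual ℝ X z‖)
    (f₀ : Dual ℝ X) (hf₀ : ‖f₀‖ ≤ 1) (hf₀x : δ / 2 < x f₀)
    (W : Set (Dual ℝ (Dual ℝ X))) (hWfin : W.Finite)
    (θ : ℝ) (hθ : 0 < θ) (hθ' : θ ≤ 1) :
    ∃ n : ℕ, δ / 4 < f₀ (dseq n) ∧
      ∀ e ∈ Submodule.span ℝ (insert x W), ∀ lam : ℝ,
        (1 - θ) * ‖e‖ ≤ ‖e + lam • (inclusionInDoubleDual ℝ X (dseq n) - x)‖ := by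
  classical
  obtain ⟨j, hj⟩ : ∃ j : X →L[ℝ] Dual ℝ (Dual ℝ X), j = inclusionInDoubleDual ℝ X := ⟨_, rfl⟩
  rw [← hj] at hdist ⊢
  set E := Submodule.span ℝ (insert x W) with hE
  haveI : FiniteDimensional ℝ E := FiniteDimensional.span_of_finite ℝ (hWfin.insert x)
  haveI : ProperSpace E := FiniteDimensional.proper ℝ E
  set Sph : Set (Dual ℝ (Dual ℝ X)) := Subtype.val '' (Metric.sphere (0 : E) 1) with hSph
  have hSphC : IsCompact Sph := (isCompact_sphere (0 : E) 1).image continuous_subtype_val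
  have hSphnorm : ∀ e ∈ Sph, ‖e‖ = 1 := by
    rintro e ⟨e', he', rfl⟩
    simpa [mem_sphere_zero_iff_norm] using he'
  have hSphmem : ∀ e ∈ Sph, e ∈ E := by
    rintro e ⟨e', _, rfl⟩; exact e'.2
  set η : ℝ := θ * δ / (2 * δ + 2) with hη
  have hηpos : 0 < η := by
    apply div_pos (by positivity)
    linarith
  have hηid : 2 * η + 2 * η / δ = θ := by
    field_simp [hη]
    rw [hη]
    field_simp
  obtain ⟨t, htsub, htfin, htcover⟩ := hSphC.finite_cover_balls hηpos
  -- near-norming functionals from X*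
  have hfe : ∀ e' : Dual ℝ (Dual ℝ X), ∃ f : Dual ℝ X, ‖f‖ ≤ 1 ∧ (e' ∈ t → 1 - η < e' f) := by
    intro e'
    by_cases he' : e' ∈ t
    · obtain ⟨f, hf1, hf2⟩ := dual_approx_norm e' (1 - η)
        (by rw [hSphnorm e' (htsub he')]; linarith)
      exact ⟨f, hf1, fun _ => hf2⟩
    · exact ⟨0, by simp, fun h => absurd h he'⟩
  choose fe hfe1 hfe2 using hfe
  set G : Finset (Dual ℝ X) := insert f₀ (htfin.toFinset.image fe) with hG
  set η' : ℝ := min η (δ / 4) with hη'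
  obtain ⟨u, huF, hu⟩ := hP G η' (lt_min hηpos (by linarith))
  set A : Set X := {v : X | |f₀ v - x f₀| < δ / 4} ∩
      ⋂ e' ∈ t, {v : X | |(fe e') v - x (fe e')| < η} with hA
  have hAopen : IsOpen A := by
    apply IsOpen.inter
    · exact isOpen_lt (by fun_prop) continuous_const
    · exact htfin.isOpen_biInter fun e' _ => isOpen_lt (by fun_prop) continuous_const
  have huA : u ∈ A := by
    constructor
    · exact lt_of_lt_of_le (hu f₀ (Finset.mem_insert_self _ _)) (min_le_right _ _)
    · simp only [Set.mem_iInter]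
      intro e' he'
      refine lt_of_lt_of_le (hu (fe e') ?_) (min_le_left _ _)
      exact Finset.mem_insert_of_mem (Finset.mem_image_of_mem fe (htfin.mem_toFinset.mpr he'))
  obtain ⟨z, hzA, hzrange⟩ :=
    (_root_.mem_closure_iff.mp (hdense huF)) A hAopen huA
  obtain ⟨n, rfl⟩ := hzrange
  refine ⟨n, ?_, ?_⟩
  · have h1 : |f₀ (dseq n) - x f₀| < δ / 4 := hzA.1
    rw [abs_lt] at h1
    linarith
  · set w : Dual ℝ (Dual ℝ X) := j (dseq n) - x with hw
    have hwnorm : δ ≤ ‖w‖ := by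
      rw [hw, norm_sub_rev]; exact hdist (dseq n)
    have hwfe : ∀ e' ∈ t, |w (fe e')| < η := by
      intro e' he'
      have := hzA.2
      simp only [Set.mem_iInter] at this
      have h2 := this e' he'
      have hwapp : w (fe e') = (fe e') (dseq n) - x (fe e') := by
        rw [hw, ContinuousLinearMap.sub_apply, hj]
        rfl
      rwa [hwapp]
    -- main estimate for unit vectors
    have Hunit : ∀ e₁, e₁ ∈ Sph → ∀ μ : ℝ, 1 - θ ≤ ‖e₁ + μ • w‖ := by
      intro e₁ he₁ μ
      rcases le_or_gt (2 / δ) |μ| with hbig | hsmall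
      · have h1 : ‖μ • w‖ ≤ ‖e₁ + μ • w‖ + ‖e₁‖ := by
          calc ‖μ • w‖ = ‖(e₁ + μ • w) - e₁‖ := by rw [add_sub_cancel_left]
          _ ≤ ‖e₁ + μ • w‖ + ‖e₁‖ := norm_sub_le _ _
        have h2 : 2 ≤ ‖μ • w‖ := by
          rw [norm_smul, Real.norm_eq_abs]
          calc (2:ℝ) = (2/δ) * δ := by field_simp
          _ ≤ |μ| * ‖w‖ := by
            apply mul_le_mul hbig hwnorm hδ.le (abs_nonneg μ)
        rw [hSphnorm e₁ he₁] at h1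
        linarith [hθ.le]
      · obtain ⟨e', he't, he'ball⟩ := Set.mem_iUnion₂.mp (htcover he₁)
        have hd : ‖e₁ - e'‖ < η := by
          rw [← dist_eq_norm]; exact Metric.mem_ball.mp he'ball
        have h3 : ‖e' + μ • w‖ - η ≤ ‖e₁ + μ • w‖ := by
          have : ‖e' + μ • w‖ ≤ ‖e₁ + μ • w‖ + ‖e₁ - e'‖ := by
            calc ‖e' + μ • w‖ = ‖(e₁ + μ • w) - (e₁ - e')‖ := by congr 1; abel
            _ ≤ ‖e₁ + μ • w‖ + ‖e₁ - e'‖ := norm_sub_le _ _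
          linarith
        have h4 : (e' + μ • w) (fe e') ≤ ‖e' + μ • w‖ := by
          have := (e' + μ • w).le_opNorm (fe e')
          have h5 : ‖(e' + μ • w) (fe e')‖ ≤ ‖e' + μ • w‖ * 1 :=
            le_trans this (by
              apply mul_le_mul_of_nonneg_left (hfe1 e') (norm_nonneg _))
          rw [mul_one] at h5
          exact (le_abs_self _).trans (by rwa [Real.norm_eq_abs] at h5)
        have h6 : 1 - η - |μ| * η ≤ (e' + μ • w) (fe e') := by
          have ha : (e' + μ • w) (fe e') = e' (fe e') + μ * w (fe e') := by
            rw [ContinuousLinearMap.add_apply, ContinuousLinearMap.smul_apply, smul_eq_mul]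
          rw [ha]
          have hb := hfe2 e' he't
          have hc : |μ * w (fe e')| ≤ |μ| * η := by
            rw [abs_mul]
            exact mul_le_mul_of_nonneg_left (hwfe e' he't).le (abs_nonneg μ)
          rw [abs_le] at hc
          linarith
        have h7 : |μ| * η ≤ (2/δ) * η := mul_le_mul_of_nonneg_right hsmall.le hηpos.le
        have h8 : (2/δ) * η = 2 * η / δ := by ring
        linarith
    -- general vectors by scaling
    intro e heE lam
    rcases eq_or_ne e 0 with rfl | hne
    · simp
    · have hc : 0 < ‖e‖ := by
        rcases (norm_nonneg e).lt_or_eq with h | h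
        · exact h
        · exact absurd ((ContinuousLinearMap.opNorm_zero_iff e).mp h.symm) hne
      set e₁ := ‖e‖⁻¹ • e with he₁
      have he₁Sph : e₁ ∈ Sph := by
        refine ⟨⟨e₁, E.smul_mem _ heE⟩, ?_, rfl⟩
        rw [mem_sphere_zero_iff_norm]
        show ‖e₁‖ = 1
        rw [he₁, norm_smul, Real.norm_eq_abs, abs_inv, abs_of_pos hc, inv_mul_cancel₀ hc.ne']
      have key := Hunit e₁ he₁Sph (‖e‖⁻¹ * lam)
      have heq : e + lam • w = ‖e‖ • (e₁ + (‖e‖⁻¹ * lam) • w) := by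
        rw [he₁, smul_add, smul_smul, smul_smul]
        rw [mul_inv_cancel₀ hc.ne', one_smul]
        congr 1
        rw [← mul_assoc, mul_inv_cancel₀ hc.ne', one_mul]
      rw [heq, norm_smul, Real.norm_eq_abs, abs_of_pos hc, mul_comm ((1:ℝ) - θ) ‖e‖]
      exact mul_le_mul_of_nonneg_left key hc.le

theorem prod_one_sub_ge (s : Finset ℕ) (f : ℕ → ℝ) (h0 : ∀ i ∈ s, 0 ≤ f i)
    (h1 : ∀ i ∈ s, f i ≤ 1) : 1 - ∑ i ∈ s, f i ≤ ∏ i ∈ s, (1 - f i) := by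
  classical
  induction s using Finset.induction with
  | empty => simp
  | @insert a s' ha ih =>
    rw [Finset.sum_insert ha, Finset.prod_insert ha]
    have hfa0 : 0 ≤ f a := h0 a (Finset.mem_insert_self _ _)
    have hfa1 : f a ≤ 1 := h1 a (Finset.mem_insert_self _ _)
    have ih' := ih (fun i hi => h0 i (Finset.mem_insert_of_mem hi))
      (fun i hi => h1 i (Finset.mem_insert_of_mem hi))
    have hs0 : 0 ≤ ∑ i ∈ s', f i := Finset.sum_nonneg fun i hi => h0 i (Finset.mem_insert_of_mem hi)
    nlinarith [mul_le_mul_of_nonneg_left ih' (by linarith : (0:ℝ) ≤ 1 - f a)]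

theorem chain_lemma {Z : Type*} [NormedAddCommGroup Z] [NormedSpace ℝ Z]
    (x : Z) (w : ℕ → Z) (θ : ℕ → ℝ) (hθ1 : ∀ k, θ k ≤ 1/2)
    (hstep : ∀ k, ∀ e ∈ Submodule.span ℝ (insert x (w '' (Set.Iio k))), ∀ lam : ℝ,
      (1 - θ k) * ‖e‖ ≤ ‖e + lam • w k‖)
    (hprod : ∀ k m : ℕ, k ≤ m → (1/2 : ℝ) ≤ ∏ i ∈ Finset.Ico k m, (1 - θ i)) :
    ∀ (t : ℝ) (a : ℕ → ℝ) (k m : ℕ), k ≤ m →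
      ‖t • x + ∑ n ∈ Finset.range k, a n • w n‖ ≤
        2 * ‖t • x + ∑ n ∈ Finset.range m, a n • w n‖ := by
  have hfac : ∀ i, (0:ℝ) ≤ 1 - θ i := fun i => by linarith [hθ1 i]
  have main : ∀ (t : ℝ) (a : ℕ → ℝ) (m k : ℕ), k ≤ m →
      (∏ i ∈ Finset.Ico k m, (1 - θ i)) * ‖t • x + ∑ n ∈ Finset.range k, a n • w n‖ ≤
        ‖t • x + ∑ n ∈ Finset.range m, a n • w n‖ := by
    intro t a m
    induction m with
    | zero =>
      intro k hk
      interval_cases k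
      simp
    | succ m ih =>
      intro k hk
      rcases Nat.lt_or_ge k (m + 1) with hlt | hge
      · have hkm : k ≤ m := Nat.lt_succ_iff.mp hlt
        have h1 := ih k hkm
        have hmem : (t • x + ∑ n ∈ Finset.range m, a n • w n) ∈
            Submodule.span ℝ (insert x (w '' (Set.Iio m))) := by
          apply Submodule.add_mem
          · exact Submodule.smul_mem _ _ (Submodule.subset_span (Set.mem_insert _ _))
          · apply Submodule.sum_mem
            intro n hn
            exact Submodule.smul_mem _ _ (Submodule.subset_span
              (Set.mem_insert_of_mem _ ⟨n, Finset.mem_range.mp hn, rfl⟩))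
        have h2 := hstep m _ hmem (a m)
        rw [Finset.prod_Ico_succ_top hkm]
        have h3 : t • x + ∑ n ∈ Finset.range (m+1), a n • w n =
            (t • x + ∑ n ∈ Finset.range m, a n • w n) + a m • w m := by
          rw [Finset.sum_range_succ]; abel
        rw [h3]
        calc (∏ i ∈ Finset.Ico k m, (1 - θ i)) * (1 - θ m) *
              ‖t • x + ∑ n ∈ Finset.range k, a n • w n‖
            = (1 - θ m) * ((∏ i ∈ Finset.Ico k m, (1 - θ i)) *
              ‖t • x + ∑ n ∈ Finset.range k, a n • w n‖) := by ring
          _ ≤ (1 - θ m) * ‖t • x + ∑ n ∈ Finset.range m, a n • w n‖ :=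
              mul_le_mul_of_nonneg_left h1 (hfac m)
          _ ≤ ‖(t • x + ∑ n ∈ Finset.range m, a n • w n) + a m • w m‖ := h2
      · have : k = m + 1 := le_antisymm hk hge
        subst this
        simp
  intro t a k m hk
  have h1 := main t a m k hk
  have h2 := hprod k m hk
  have h3 : (0:ℝ) ≤ ‖t • x + ∑ n ∈ Finset.range k, a n • w n‖ := norm_nonneg _
  nlinarith

theorem theta_prod_ge (k m : ℕ) (hk : k ≤ m) :
    (1/2 : ℝ) ≤ ∏ i ∈ Finset.Ico k m, (1 - (1/2:ℝ)^(i+2)) := by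
  have h0 : ∀ i ∈ Finset.Ico k m, (0:ℝ) ≤ (1/2:ℝ)^(i+2) := fun i _ => by positivity
  have h1 : ∀ i ∈ Finset.Ico k m, ((1/2:ℝ)^(i+2)) ≤ 1 := fun i _ => by
    apply pow_le_one₀ <;> norm_num
  have hsum : ∑ i ∈ Finset.Ico k m, ((1/2:ℝ))^(i+2) ≤ 1/2 := by
    have hsub : ∑ i ∈ Finset.Ico k m, ((1/2:ℝ))^(i+2) ≤
        ∑ i ∈ Finset.range m, ((1/2:ℝ))^(i+2) := by
      apply Finset.sum_le_sum_of_subset_of_nonneg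
      · intro i hi
        exact Finset.mem_range.mpr (Finset.mem_Ico.mp hi).2
      · intro i _ _; positivity
    have heq : ∑ i ∈ Finset.range m, ((1/2:ℝ))^(i+2) =
        (1/4) * ∑ i ∈ Finset.range m, ((1/2:ℝ))^i := by
      rw [Finset.mul_sum]
      apply Finset.sum_congr rfl
      intro i _
      ring
    have := sum_geometric_two_le m
    rw [heq] at hsub
    linarith
  calc (1/2:ℝ) ≤ 1 - ∑ i ∈ Finset.Ico k m, ((1/2:ℝ))^(i+2) := by linarith
  _ ≤ ∏ i ∈ Finset.Ico k m, (1 - (1/2:ℝ)^(i+2)) := prod_one_sub_ge _ _ h0 h1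

theorem exists_rec_seq {α : Type*} [Inhabited α] (Good : (ℕ → α) → ℕ → α → Prop)
    (hdep : ∀ (v v' : ℕ → α) (k : ℕ) (n : α), (∀ i < k, v i = v' i) → Good v k n → Good v' k n)
    (hstep : ∀ (v : ℕ → α) (k : ℕ), ∃ n, Good v k n) :
    ∃ c : ℕ → α, ∀ k, Good c k (c k) := by
  classical
  choose pick hpick using hstep
  let vfun : ℕ → (ℕ → α) := fun k =>
    Nat.rec (fun _ => default) (fun k prev => Function.update prev k (pick prev k)) k
  set c : ℕ → α := fun k => pick (vfun k) k with hc
  have hagree : ∀ k, ∀ i < k, vfun k i = c i := by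
    intro k
    induction k with
    | zero => intro i hi; omega
    | succ k ih =>
      intro i hi
      have hstepdef : vfun (k+1) = Function.update (vfun k) k (pick (vfun k) k) := rfl
      rw [hstepdef]
      rcases Nat.lt_succ_iff_lt_or_eq.mp hi with h | rfl
      · rw [Function.update_of_ne (by omega)]
        exact ih i h
      · rw [Function.update_self]
  exact ⟨c, fun k => hdep (vfun k) c k (c k) (hagree k) (hpick (vfun k) k)⟩

section Main

variable {X : Type*} [NormedAddCommGroup X] [NormedSpace ℝ X]

set_option maxHeartbeats 2000000 in
theorem main_branch_exists [CompleteSpace X]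
    (F : Set X) (hcl : IsClosed F) (hne : F.Nonempty) (hconv : Convex ℝ F)
    (hbdd : Bornology.IsBounded F) (dseq : ℕ → X) (hdense : F ⊆ closure (Set.range dseq))
    (hnc : ¬ IsCompact (toWeakSpace ℝ X '' F)) :
    ∃ ε M : ℝ, 0 < ε ∧ ε ≤ 1 ∧ 1 ≤ M ∧
      ∃ c : ℕ → ℕ, ∀ m : ℕ,
        MSchauder M m (fun n => dseq (c n)) ∧
        DominatesSummingBasis ε m (fun n => dseq (c n)) := by
  classical
  obtain ⟨R, hR⟩ := hbdd.exists_norm_le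
  have hR0 : 0 ≤ R := by
    obtain ⟨u, hu⟩ := hne
    exact (norm_nonneg u).trans (hR u hu)
  obtain ⟨x, hP, hxnorm, hxnotin⟩ := exists_wstar_cluster F hcl hne hconv hR hnc
  obtain ⟨j, hj⟩ : ∃ j : X →L[ℝ] Dual ℝ (Dual ℝ X), j = inclusionInDoubleDual ℝ X := ⟨_, rfl⟩
  have hjiso : ∀ z : X, ‖j z‖ = ‖z‖ := by
    intro z
    rw [hj]
    exact (inclusionInDoubleDualLi ℝ (E := X)).norm_map z
  have hjrange_closed : IsClosed (Set.range ⇑j) := by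
    rw [hj]
    have : Isometry ⇑(inclusionInDoubleDual ℝ X) :=
      (inclusionInDoubleDualLi ℝ (E := X)).isometry
    exact this.isClosedEmbedding.isClosed_range
  have hxnotin' : x ∉ Set.range ⇑j := by rw [hj]; exact hxnotin
  set δ : ℝ := Metric.infDist x (Set.range ⇑j) with hδdef
  have hδpos : 0 < δ := by
    rw [hδdef]
    exact (hjrange_closed.notMem_iff_infDist_pos ⟨j 0, Set.mem_range_self 0⟩).mp hxnotin'
  have hdist : ∀ z : X, δ ≤ ‖x - j z‖ := by
    intro z
    rw [hδdef, ← dist_eq_norm]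
    exact Metric.infDist_le_dist_of_mem (Set.mem_range_self z)
  have hxge : δ ≤ ‖x‖ := by
    have := hdist 0
    simpa using this
  -- norming functional f₀
  obtain ⟨f₀, hf₀norm, hf₀x⟩ := dual_approx_norm x (δ/2) (by linarith)
  -- the functional Φ vanishing on the range of j with Φ x = 1
  have hxS : x ∉ LinearMap.range ((j : X →L[ℝ] Dual ℝ (Dual ℝ X)) : X →ₗ[ℝ] Dual ℝ (Dual ℝ X)) := by
    intro hmem
    obtain ⟨z, hz⟩ := hmem
    exact hxnotin' ⟨z, hz⟩
  have hSclosed : IsClosed ((LinearMap.range ((j : X →L[ℝ] Dual ℝ (Dual ℝ X)) :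
      X →ₗ[ℝ] Dual ℝ (Dual ℝ X)) : Submodule ℝ (Dual ℝ (Dual ℝ X))) : Set (Dual ℝ (Dual ℝ X))) := by
    convert hjrange_closed using 1
    exact LinearMap.coe_range _
  obtain ⟨Φ, hΦx, hΦ0⟩ := exists_functional_vanishing _ hSclosed x hxS
  have hΦj : ∀ z : X, Φ (j z) = 0 := fun z => hΦ0 (j z) (LinearMap.mem_range_self _ z)
  set CΦ : ℝ := ‖Φ‖ with hCΦ
  have hCΦ0 : 0 ≤ CΦ := norm_nonneg Φ
  -- the branch
  set Good : (ℕ → ℕ) → ℕ → ℕ → Prop := fun v k n =>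
    δ / 4 < f₀ (dseq n) ∧
    ∀ e ∈ Submodule.span ℝ (insert x ((fun i => j (dseq (v i)) - x) '' (Set.Iio k))),
      ∀ lam : ℝ, (1 - (1/2:ℝ)^(k+2)) * ‖e‖ ≤ ‖e + lam • (j (dseq n) - x)‖ with hGood
  have hdep : ∀ (v v' : ℕ → ℕ) (k : ℕ) (n : ℕ), (∀ i < k, v i = v' i) → Good v k n → Good v' k n := by
    intro v v' k n hvv' hg
    have himg : (fun i => j (dseq (v i)) - x) '' (Set.Iio k) =
        (fun i => j (dseq (v' i)) - x) '' (Set.Iio k) := by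
      apply Set.image_congr
      intro i hi
      rw [hvv' i hi]
    refine ⟨hg.1, fun e he lam => hg.2 e ?_ lam⟩
    rw [himg]
    exact he
  have hstep : ∀ (v : ℕ → ℕ) (k : ℕ), ∃ n, Good v k n := by
    intro v k
    have hjstep := step_lemma F dseq hdense x hP hδpos (by rw [← hj] at *; exact hdist) f₀ hf₀norm hf₀x
      ((fun i => j (dseq (v i)) - x) '' (Set.Iio k))
      ((Set.finite_Iio k).image _) ((1/2:ℝ)^(k+2)) (by positivity)
      (by apply pow_le_one₀ <;> norm_num)
    obtain ⟨n, hn1, hn2⟩ := hjstep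
    refine ⟨n, hn1, ?_⟩
    rw [← hj] at hn2
    exact hn2
  obtain ⟨c, hc⟩ := exists_rec_seq Good hdep hstep
  -- notation
  obtain ⟨u, hu⟩ : ∃ u : ℕ → X, u = fun n => dseq (c n) := ⟨_, rfl⟩
  obtain ⟨w, hw⟩ : ∃ w : ℕ → Dual ℝ (Dual ℝ X), w = fun n => j (u n) - x := ⟨_, rfl⟩
  have hwn : ∀ n, w n = j (u n) - x := fun n => by rw [hw]
  have hun : ∀ n, u n = dseq (c n) := fun n => by rw [hu]
  have hθ1 : ∀ k : ℕ, ((1/2:ℝ))^(k+2) ≤ 1/2 := by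
    intro k
    calc ((1/2:ℝ))^(k+2) ≤ (1/2:ℝ)^1 := by
          apply pow_le_pow_of_le_one <;> norm_num <;> omega
    _ = 1/2 := by norm_num
  have hchain := chain_lemma x w (fun k => (1/2:ℝ)^(k+2)) hθ1
    (fun k => by
      have := (hc k).2
      intro e he lam
      have himg : (fun i => j (dseq (c i)) - x) '' (Set.Iio k) = w '' (Set.Iio k) := by
        apply Set.image_congr
        intro i _
        rw [hwn i, hun i]
      rw [himg] at this
      have h2 := this e he lam
      have hwk : j (dseq (c k)) - x = w k := by rw [hwn k, hun k]
      rw [hwk] at h2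
      exact h2)
    (fun k m hk => theta_prod_ge k m hk)
  -- constants
  obtain ⟨M, hM⟩ : ∃ M : ℝ, M = 2 + 2*R/δ + CΦ*R*(2 + 2*R/δ) := ⟨_, rfl⟩
  have hM1 : 1 ≤ M := by
    rw [hM]
    have h1 : 0 ≤ 2*R/δ := by positivity
    have h2 : 0 ≤ CΦ*R*(2 + 2*R/δ) := by positivity
    linarith
  obtain ⟨ε, hε⟩ : ∃ ε : ℝ, ε = min (δ/4) 1 := ⟨_, rfl⟩
  refine ⟨ε, M, by rw [hε]; exact lt_min (by linarith) one_pos,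
    by rw [hε]; exact min_le_right _ _, hM1, c, ?_⟩
  intro m
  have hfun : (fun n => dseq (c n)) = u := hu.symm
  rw [hfun]
  constructor
  · -- MSchauder
    intro k hk a
    -- pass to the bidual
    have hsum : ∀ p : ℕ, j (∑ n ∈ Finset.range p, a n • u n) =
        (∑ n ∈ Finset.range p, a n) • x + ∑ n ∈ Finset.range p, a n • w n := by
      intro p
      rw [map_sum]
      have : ∀ n, j (a n • u n) = a n • w n + a n • x := by
        intro n
        rw [map_smul, hwn n, smul_sub]
        abel
      rw [Finset.sum_congr rfl (fun n _ => this n)]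
      rw [Finset.sum_add_distrib, ← Finset.sum_smul]
      abel
    obtain ⟨sk, hsk⟩ : ∃ s : ℝ, s = ∑ n ∈ Finset.range k, a n := ⟨_, rfl⟩
    obtain ⟨sm, hsm⟩ : ∃ s : ℝ, s = ∑ n ∈ Finset.range m, a n := ⟨_, rfl⟩
    obtain ⟨Wk, hWk⟩ : ∃ W : Dual ℝ (Dual ℝ X), W = ∑ n ∈ Finset.range k, a n • w n := ⟨_, rfl⟩
    obtain ⟨Wm, hWm⟩ : ∃ W : Dual ℝ (Dual ℝ X), W = ∑ n ∈ Finset.range m, a n • w n := ⟨_, rfl⟩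
    obtain ⟨B, hB⟩ : ∃ B : ℝ, B = ‖∑ n ∈ Finset.range m, a n • u n‖ := ⟨_, rfl⟩
    have hB0 : 0 ≤ B := by rw [hB]; exact norm_nonneg _
    have hBm : ‖sm • x + Wm‖ = B := by
      rw [hB, hsm, hWm, ← hjiso (∑ n ∈ Finset.range m, a n • u n), hsum m]
    have hSk : ‖∑ n ∈ Finset.range k, a n • u n‖ = ‖sk • x + Wk‖ := by
      rw [hsk, hWk, ← hjiso (∑ n ∈ Finset.range k, a n • u n), hsum k]
    -- fact 1 : |sm| * δ ≤ 2 * B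
    have hsmbound : |sm| * δ ≤ 2 * B := by
      have h0 := hchain sm a 0 m (Nat.zero_le m)
      simp only [Finset.range_zero, Finset.sum_empty, add_zero] at h0
      rw [← hWm, hBm] at h0
      have : |sm| * δ ≤ |sm| * ‖x‖ := mul_le_mul_of_nonneg_left hxge (abs_nonneg sm)
      calc |sm| * δ ≤ |sm| * ‖x‖ := this
      _ = ‖sm • x‖ := by rw [norm_smul, Real.norm_eq_abs]
      _ ≤ 2 * B := h0
    -- fact 2 : ‖sm • x + Wk‖ ≤ 2 * B
    have hmid : ‖sm • x + Wk‖ ≤ 2 * B := by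
      have := hchain sm a k m hk
      rw [← hWm, ← hWk, hBm] at this
      exact this
    -- fact 3 : ‖Wk‖ ≤ 2*B + |sm| * ‖x‖
    have hWkbound : ‖Wk‖ ≤ 2*B + |sm| * ‖x‖ := by
      calc ‖Wk‖ = ‖(sm • x + Wk) - sm • x‖ := by rw [add_sub_cancel_left]
      _ ≤ ‖sm • x + Wk‖ + ‖sm • x‖ := norm_sub_le _ _
      _ ≤ 2*B + |sm| * ‖x‖ := by
          rw [norm_smul, Real.norm_eq_abs]
          linarith [hmid]
    -- fact 4 : |sk| ≤ CΦ * ‖Wk‖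
    have hskbound : |sk| ≤ CΦ * ‖Wk‖ := by
      have hΦWk : Φ Wk = -sk := by
        rw [hWk, map_sum, hsk]
        have : ∀ n, Φ (a n • w n) = a n * (-1) := by
          intro n
          rw [map_smul, smul_eq_mul]
          congr 1
          rw [hwn n, map_sub, hΦj, hΦx]
          norm_num
        rw [Finset.sum_congr rfl (fun n _ => this n)]
        rw [← Finset.sum_mul]
        ring
      have := Φ.le_opNorm Wk
      rw [hΦWk] at this
      rw [Real.norm_eq_abs, abs_neg] at this
      exact this
    -- combine
    rw [hSk]
    have hxR : ‖x‖ ≤ R := hxnorm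
    have hfinal : ‖sk • x + Wk‖ ≤ ‖sm • x + Wk‖ + (|sm| + |sk|) * ‖x‖ := by
      calc ‖sk • x + Wk‖ = ‖(sm • x + Wk) + (sk - sm) • x‖ := by
            congr 1
            rw [sub_smul]
            abel
      _ ≤ ‖sm • x + Wk‖ + ‖(sk - sm) • x‖ := norm_add_le _ _
      _ ≤ ‖sm • x + Wk‖ + (|sm| + |sk|) * ‖x‖ := by
          rw [norm_smul, Real.norm_eq_abs]
          have : |sk - sm| ≤ |sk| + |sm| := abs_sub _ _
          have h2 : |sk - sm| * ‖x‖ ≤ (|sk| + |sm|) * ‖x‖ :=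
            mul_le_mul_of_nonneg_right this (norm_nonneg x)
          linarith
    -- numeric estimates
    have h1 : |sm| ≤ 2*B/δ := by
      rw [le_div_iff₀ hδpos]
      linarith
    have h2 : |sm| * ‖x‖ ≤ (2*B/δ) * R := by
      apply mul_le_mul h1 hxR (norm_nonneg x) (by positivity)
    have h3 : ‖Wk‖ ≤ 2*B + (2*B/δ)*R := by linarith
    have h4 : |sk| ≤ CΦ * (2*B + (2*B/δ)*R) :=
      le_trans hskbound (mul_le_mul_of_nonneg_left h3 hCΦ0)
    have h5 : (|sm| + |sk|) * ‖x‖ ≤ (2*B/δ + CΦ * (2*B + (2*B/δ)*R)) * R := by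
      apply mul_le_mul _ hxR (norm_nonneg x) _
      · linarith
      · have : 0 ≤ 2*B/δ := by positivity
        have h6 : 0 ≤ CΦ * (2*B + (2*B/δ)*R) := by positivity
        linarith
    have hgoal : ‖sk • x + Wk‖ ≤ M * B := by
      have hMB : M * B = 2*B + (2*B/δ)*R + CΦ*(2*B + (2*B/δ)*R)*R := by
        rw [hM]
        field_simp
      rw [hMB]
      have := hfinal
      nlinarith [hmid, h5]
    rw [← hB]
    exact hgoal
  · -- DominatesSummingBasis
    intro a hpos hsum1
    rcases Nat.eq_zero_or_pos m with rfl | hm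
    · simp at hsum1
    have hf₀u : ∀ n, δ/4 < f₀ (u n) := fun n => by
      rw [hun n]
      exact (hc n).1
    have happ : f₀ (∑ n ∈ Finset.range m, a n • u n) = ∑ n ∈ Finset.range m, a n * f₀ (u n) := by
      rw [map_sum]
      apply Finset.sum_congr rfl
      intro n _
      rw [map_smul, smul_eq_mul]
    have hlow : δ/4 ≤ f₀ (∑ n ∈ Finset.range m, a n • u n) := by
      rw [happ]
      calc δ/4 = ∑ n ∈ Finset.range m, a n * (δ/4) := by
            rw [← Finset.sum_mul, hsum1, one_mul]
      _ ≤ ∑ n ∈ Finset.range m, a n * f₀ (u n) := by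
          apply Finset.sum_le_sum
          intro n hn
          exact mul_le_mul_of_nonneg_left (hf₀u n).le (hpos n (Finset.mem_range.mp hn)).le
    have hval : f₀ (∑ n ∈ Finset.range m, a n • u n) ≤ ‖∑ n ∈ Finset.range m, a n • u n‖ := by
      have h1 := f₀.le_opNorm (∑ n ∈ Finset.range m, a n • u n)
      have h2 : ‖f₀ (∑ n ∈ Finset.range m, a n • u n)‖ ≤ 1 * ‖∑ n ∈ Finset.range m, a n • u n‖ :=
        le_trans h1 (mul_le_mul_of_nonneg_right hf₀norm (norm_nonneg _))
      rw [one_mul, Real.norm_eq_abs] at h2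
      exact (le_abs_self _).trans h2
    calc ε ≤ δ/4 := by rw [hε]; exact min_le_left _ _
    _ ≤ _ := le_trans hlow hval

end Main

end Aux

/-- If `F` is a nonempty closed bounded convex subset of a separable Banach space which
is **not** weakly compact, then for some `0 < ε ≤ 1 ≤ M` there is an infinite branch
`(u n)` of the tree `T(F, ε, M)`: for every `m`, the finite sequence
`(d (u 0) F, …, d (u (m-1)) F)` is `M`-Schauder and `ε`-dominates the summing basis. -/
theorem tree_ill_founded_of_not_weaklyCompact
    {X : Type*} [NormedAddCommGroup X] [NormedSpace ℝ X] [CompleteSpace X]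
    [TopologicalSpace.SeparableSpace X] [MeasurableSpace X] [BorelSpace X]
    (d : ℕ → {F : Set X // IsClosed F} → X)
    (hd : ∀ n, @Measurable _ _ (effrosBorel X) _ (d n))
    (hdmem : ∀ K : {F : Set X // IsClosed F}, (K : Set X).Nonempty → ∀ n, d n K ∈ (K : Set X))
    (hdense : ∀ K : {F : Set X // IsClosed F}, (K : Set X).Nonempty →
      closure (Set.range fun n => d n K) = (K : Set X))
    (F : {F : Set X // IsClosed F}) (hFne : (F : Set X).Nonempty)
    (hFbdd : Bornology.IsBounded (F : Set X)) (hFconv : Convex ℝ (F : Set X))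
    (hFnwc : ¬ IsCompact (toWeakSpace ℝ X '' (F : Set X))) :
    ∃ ε M : ℝ, 0 < ε ∧ ε ≤ 1 ∧ 1 ≤ M ∧
      ∃ u : ℕ → ℕ, ∀ m : ℕ,
        MSchauder M m (fun n => d (u n) F) ∧
        DominatesSummingBasis ε m (fun n => d (u n) F) := by
  classical
  have hdense' : (F : Set X) ⊆ closure (Set.range fun n => d n F) := by
    rw [hdense F hFne]
  obtain ⟨ε, M, h1, h2, h3, c, hc⟩ := main_branch_exists (F : Set X) F.2 hFne hFconv hFbdd
    (fun n => d n F) hdense' hFnwc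
  exact ⟨ε, M, h1, h2, h3, c, hc⟩
end
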